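/- Representer theorem for regularized least squares: let H be an RKHS with kernel K on 𝒳, data (x₁,y₁),…,(xₙ,yₙ) ∈ 𝒳 × ℝ, and λ > 0. Any minimizer f of J(f) = Σᵢ (f(xᵢ) − yᵢ)² + λ‖f‖²_H over H lies in the span of {K(·,x₁),…,K(·,xₙ)}, i.e., there exist c₁,…,cₙ ∈ ℝ with f = Σᵢ cᵢ K(·,xᵢ). -/

import Mathlib

open RealInnerProductSpace

/-- Representer theorem for regularized least squares: any minimizer of
`J(f) = Σᵢ (f(xᵢ) - yᵢ)² + λ‖f‖²` over an RKHS lies in the span of the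
kernel sections at the data points. -/
theorem representer_theorem {𝒳 H : Type*} [NormedAddCommGroup H]
    [InnerProductSpace ℝ H] [CompleteSpace H]
    (ev : H →ₗ[ℝ] (𝒳 → ℝ)) (Kf : 𝒳 → H)
    (hrep : ∀ (x : 𝒳) (f : H), ⟪Kf x, f⟫ = ev f x)
    {n : ℕ} (x : Fin n → 𝒳) (y : Fin n → ℝ) (lam : ℝ) (hlam : 0 < lam)
    (f : H)
    (hmin : ∀ g : H,
      (∑ i, (ev f (x i) - y i) ^ 2) + lam * ‖f‖ ^ 2 ≤
      (∑ i, (ev g (x i) - y i) ^ 2) + lam * ‖g‖ ^ 2) :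
    f ∈ Submodule.span ℝ (Set.range fun i => Kf (x i)) := by
  set S : Submodule ℝ H := Submodule.span ℝ (Set.range fun i => Kf (x i)) with hS
  haveI : FiniteDimensional ℝ S := by
    apply FiniteDimensional.span_of_finite
    exact Set.finite_range _
  set g : H := (S.orthogonalProjectionOnto f : H) with hg
  have horth : f - g ∈ Sᗮ := Submodule.sub_starProjection_mem_orthogonal (K := S) f
  have hgS : g ∈ S := (S.orthogonalProjectionOnto f).2
  -- evaluations agree
  have heval : ∀ i, ev g (x i) = ev f (x i) := by
    intro i
    have hmem : Kf (x i) ∈ S := Submodule.subset_span ⟨i, rfl⟩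
    have h0 : ⟪Kf (x i), f - g⟫ = 0 :=
      (Submodule.mem_orthogonal S (f - g)).mp horth _ hmem
    rw [inner_sub_right, hrep, hrep, sub_eq_zero] at h0
    exact h0.symm
  -- norm decomposition
  have hnorm : ‖f‖ ^ 2 = ‖g‖ ^ 2 + ‖f - g‖ ^ 2 := by
    have hinner : ⟪g, f - g⟫ = 0 :=
      ((Submodule.mem_orthogonal S (f - g)).mp horth _ hgS)
    have := norm_add_sq_real g (f - g)
    simpa [hinner, add_sub_cancel] using this
  have hle := hmin g
  have hsum : (∑ i, (ev g (x i) - y i) ^ 2) = ∑ i, (ev f (x i) - y i) ^ 2 := by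
    refine Finset.sum_congr rfl fun i _ => by rw [heval]
  rw [hsum] at hle
  have hle2 : ‖f‖ ^ 2 ≤ ‖g‖ ^ 2 := le_of_mul_le_mul_left (by linarith) hlam
  have : ‖f - g‖ ^ 2 ≤ 0 := by linarith
  have hfg : f - g = 0 := by
    have := sq_nonneg ‖f - g‖
    have : ‖f - g‖ ^ 2 = 0 := le_antisymm ‹‖f - g‖ ^ 2 ≤ 0› this
    simpa [pow_eq_zero_iff] using this
  have : f = g := by rwa [sub_eq_zero] at hfg
  rw [this]; exact hgS
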